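/- Let G be a simple mixed graph on n ≥ 1 vertices that has at least one edge or at least one arc. Then ν₁(G) ≥ max{Δ₁(G), Δ₂(G)} + 1, where Δ₁(G) = max_v (d v + d⁺ v) and Δ₂(G) = max_v (d v + d⁻ v). -/

import Mathlib

set_option linter.unusedSectionVars false

open Matrix Finset Polynomial

variable {V : Type*} [Fintype V] [DecidableEq V]

/-- Undirected adjacency matrix of the mixed graph with edge-multiplicity function `E`:
`(u,v)`-entry `E u v` for `u ≠ v`, and `(v,v)`-entry `2 * E v v`. -/
def Au (E : V → V → ℕ) : Matrix V V ℝ :=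
  Matrix.of fun u v => if u = v then ((2 * E v v : ℕ) : ℝ) else ((E u v : ℕ) : ℝ)

/-- Arc matrix of the mixed graph with arc-multiplicity function `A`. -/
def Bm (A : V → V → ℕ) : Matrix V V ℝ := Matrix.of fun u v => ((A u v : ℕ) : ℝ)

/-- Undirected degree `d v`. -/
def dU (E : V → V → ℕ) (v : V) : ℕ :=
  (∑ u ∈ Finset.univ.filter (fun u => u ≠ v), E v u) + 2 * E v v

/-- Out-degree `d⁺ v`. -/
def dOut (A : V → V → ℕ) (v : V) : ℕ := ∑ u, A v u

/-- In-degree `d⁻ v`. -/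
def dIn (A : V → V → ℕ) (v : V) : ℕ := ∑ u, A u v

/-- Integrated adjacency matrix `𝓘(G) = [[Aᵤ, B], [Bᵀ, Aᵤ]]`. -/
def intAdj (E A : V → V → ℕ) : Matrix (V ⊕ V) (V ⊕ V) ℝ :=
  Matrix.fromBlocks (Au E) (Bm A) (Bm A)ᵀ (Au E)

/-- Integrated degree matrix `𝓘ᴰ(G)`. -/
def intDeg (E A : V → V → ℕ) : Matrix (V ⊕ V) (V ⊕ V) ℝ :=
  Matrix.diagonal (Sum.elim (fun v => ((dU E v + dOut A v : ℕ) : ℝ))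
    (fun v => ((dU E v + dIn A v : ℕ) : ℝ)))

/-- Integrated Laplacian matrix `𝓘ᴸ(G) = 𝓘ᴰ(G) - 𝓘(G)`. -/
def intLap (E A : V → V → ℕ) : Matrix (V ⊕ V) (V ⊕ V) ℝ := intDeg E A - intAdj E A

/-- Integrated signless Laplacian matrix `𝓘Q(G) = 𝓘ᴰ(G) + 𝓘(G)`. -/
def intQ (E A : V → V → ℕ) : Matrix (V ⊕ V) (V ⊕ V) ℝ := intDeg E A + intAdj E A

/-- A mixed graph is simple: multiplicities at most 1, no loops, no directed loops. -/
def IsSimple (E A : V → V → ℕ) : Prop :=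
  (∀ u v, E u v ≤ 1) ∧ (∀ u v, A u v ≤ 1) ∧ (∀ v, E v v = 0) ∧ (∀ v, A v v = 0)

/-- Number of edges (excluding loops): `e(G) = (1/2)·Σ_{u ≠ v} E u v`. -/
noncomputable def numEdges (E : V → V → ℕ) : ℝ :=
  (∑ u, ∑ v ∈ Finset.univ.filter (fun v => v ≠ u), (E u v : ℝ)) / 2

/-- Number of loops: `l(G) = Σ_v E v v`. -/
noncomputable def numLoops (E : V → V → ℕ) : ℝ := ∑ v, (E v v : ℝ)

/-- Number of arcs (including directed loops): `a(G) = Σ_{u,v} A u v`. -/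
noncomputable def numArcs (A : V → V → ℕ) : ℝ := ∑ u, ∑ v, (A u v : ℝ)

lemma intAdj_isHermitian (E A : V → V → ℕ) (hE : ∀ u v, E u v = E v u) :
    (intAdj E A).IsHermitian := by
  have hAu : (Au E)ᵀ = Au E := by
    ext u v
    by_cases h : u = v
    · subst h; rfl
    · simp [Au, Matrix.transpose_apply, h, Ne.symm h, hE u v]
  show (intAdj E A)ᴴ = intAdj E A
  rw [Matrix.conjTranspose_eq_transpose_of_trivial]
  unfold intAdj
  rw [Matrix.fromBlocks_transpose, hAu, Matrix.transpose_transpose]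

lemma intLap_isHermitian (E A : V → V → ℕ) (hE : ∀ u v, E u v = E v u) :
    (intLap E A).IsHermitian :=
  (Matrix.isHermitian_diagonal _).sub (intAdj_isHermitian E A hE)

lemma intQ_isHermitian (E A : V → V → ℕ) (hE : ∀ u v, E u v = E v u) :
    (intQ E A).IsHermitian :=
  (Matrix.isHermitian_diagonal _).add (intAdj_isHermitian E A hE)

/-- The non-increasing rearrangement of a finite tuple of reals. -/
noncomputable def sortDesc {N : ℕ} (f : Fin N → ℝ) : Fin N → ℝ :=
  fun i => (f ∘ Tuple.sort f) i.rev

/-- The eigenvalues of the integrated Laplacian matrix `𝓘ᴸ(G)`, in non-increasing order: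
`nuT E A hE i` is `ν_{i+1}(G)` (0-indexed). -/
noncomputable def nuT {n : ℕ} (E A : Fin n → Fin n → ℕ) (hE : ∀ u v, E u v = E v u) :
    Fin (n + n) → ℝ :=
  sortDesc (fun i => (intLap_isHermitian E A hE).eigenvalues (finSumFinEquiv.symm i))

/-- The eigenvalues of the integrated signless Laplacian matrix `𝓘Q(G)`, in non-increasing
order: `xiT E A hE i` is `ξ_{i+1}(G)` (0-indexed). -/
noncomputable def xiT {n : ℕ} (E A : Fin n → Fin n → ℕ) (hE : ∀ u v, E u v = E v u) :
    Fin (n + n) → ℝ :=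
  sortDesc (fun i => (intQ_isHermitian E A hE).eigenvalues (finSumFinEquiv.symm i))

/-- The eigenvalues of the integrated adjacency matrix `𝓘(G)`, in non-increasing order:
`lamT E A hE i` is `λ_{i+1}(G)` (0-indexed). -/
noncomputable def lamT {n : ℕ} (E A : Fin n → Fin n → ℕ) (hE : ∀ u v, E u v = E v u) :
    Fin (n + n) → ℝ :=
  sortDesc (fun i => (intAdj_isHermitian E A hE).eigenvalues (finSumFinEquiv.symm i))


section Aux

lemma sortDesc_zero_ge {N : ℕ} (hN : 0 < N) (f : Fin N → ℝ) (j : Fin N) :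
    f j ≤ sortDesc f ⟨0, hN⟩ := by
  have h1 : f j = (f ∘ Tuple.sort f) ((Tuple.sort f)⁻¹ j) := by simp
  rw [sortDesc, h1]
  apply Tuple.monotone_sort f
  rw [Fin.le_def]
  simp [Fin.rev]
  omega

lemma rayleigh_aux {S : Type*} [Fintype S] [DecidableEq S] (M : Matrix S S ℝ)
    (hM : M.IsHermitian) (c : ℝ) (hc : ∀ i, hM.eigenvalues i ≤ c) (x : S → ℝ) :
    x ⬝ᵥ (M *ᵥ x) ≤ c * (x ⬝ᵥ x) := by
  have hdiag : Matrix.diagonal (RCLike.ofReal ∘ hM.eigenvalues)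
      = Matrix.diagonal hM.eigenvalues := by
    ext i j; by_cases h : i = j <;> simp [h]
  set U : Matrix S S ℝ := (hM.eigenvectorUnitary : Matrix S S ℝ) with hU
  have hUU : U * star U = 1 := Matrix.mem_unitaryGroup_iff.mp hM.eigenvectorUnitary.2
  have hspec : M = U * Matrix.diagonal hM.eigenvalues * Uᴴ := by
    rw [← hdiag, ← Matrix.star_eq_conjTranspose]; exact hM.spectral_theorem
  have hps : (c • (1 : Matrix S S ℝ) - M).PosSemidef := by
    have h1 : c • (1 : Matrix S S ℝ) - M
        = U * Matrix.diagonal (fun i => c - hM.eigenvalues i) * Uᴴ := by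
      have : Matrix.diagonal (fun i => c - hM.eigenvalues i)
          = c • (1 : Matrix S S ℝ) - Matrix.diagonal hM.eigenvalues := by
        rw [← Matrix.diagonal_one, ← Matrix.diagonal_smul, ← Matrix.diagonal_sub]
        ext i j; by_cases h : i = j <;> simp [h, Matrix.one_apply]
      rw [this, Matrix.mul_sub, Matrix.sub_mul, ← hspec]
      congr 1
      rw [Matrix.mul_smul, Matrix.smul_mul, mul_one, ← Matrix.star_eq_conjTranspose, hUU]
    rw [h1]
    exact (Matrix.PosSemidef.diagonal (fun i => by simpa using hc i)).mul_mul_conjTranspose_same U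
  have h2 := hps.dotProduct_mulVec_nonneg x
  have h3 : star x = x := rfl
  rw [h3, Matrix.sub_mulVec, Matrix.smul_mulVec, Matrix.one_mulVec,
    dotProduct_sub, dotProduct_smul] at h2
  simp only [smul_eq_mul] at h2
  linarith

lemma key_aux {S : Type*} [Fintype S] [DecidableEq S]
    (N : Matrix S S ℝ) (hsymm : ∀ z z', N z z' = N z' z)
    (h01 : ∀ z z', N z z' = 0 ∨ N z z' = 1) (hdiag : ∀ z, N z z = 0)
    (c : ℝ)
    (hc : ∀ x : S → ℝ,
      x ⬝ᵥ ((Matrix.diagonal (fun z => ∑ z', N z z') - N) *ᵥ x) ≤ c * (x ⬝ᵥ x))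
    (w : S) (hw : 1 ≤ ∑ z', N w z') :
    (∑ z', N w z') + 1 ≤ c := by
  have hN0 : ∀ z z', 0 ≤ N z z' := fun z z' => by
    rcases h01 z z' with h | h <;> rw [h] <;> norm_num
  have hN1 : ∀ z z', N z z' ≤ 1 := fun z z' => by
    rcases h01 z z' with h | h <;> rw [h] <;> norm_num
  have hNsq : ∀ z z', N z z' * N z z' = N z z' := fun z z' => by
    rcases h01 z z' with h | h <;> rw [h] <;> norm_num
  set Δ : ℝ := ∑ z', N w z' with hΔ
  set e : Finset S := Finset.univ.erase w with he
  have hesum : ∀ z : S, ∑ z' ∈ e, N z z' = (∑ z', N z z') - N z w := by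
    intro z
    rw [he, ← Finset.sum_erase_add Finset.univ _ (Finset.mem_univ w)]
    ring
  have heΔ : ∑ z' ∈ e, N w z' = Δ := by rw [hesum, hsymm w w, hdiag, sub_zero]
  set x : S → ℝ := fun z => if z = w then Δ else -(N w z) with hx
  set deg : S → ℝ := fun z => ∑ z', N z z' with hdeg
  have hdw : deg w = Δ := rfl
  have hmv : ∀ z, ((Matrix.diagonal deg - N) *ᵥ x) z
      = deg z * x z - ∑ z', N z z' * x z' := by
    intro z
    rw [Matrix.sub_mulVec]
    simp only [Pi.sub_apply, Matrix.mulVec_diagonal, Matrix.mulVec, dotProduct]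
    congr 1
    simp [Matrix.diagonal_apply, ite_mul, Finset.sum_ite_eq]
  have hxx : x ⬝ᵥ x = Δ * Δ + Δ := by
    rw [dotProduct, ← Finset.sum_erase_add Finset.univ _ (Finset.mem_univ w)]
    have h1 : ∑ z ∈ e, x z * x z = Δ := by
      rw [← heΔ]
      apply Finset.sum_congr rfl
      intro z hz
      have hzw : z ≠ w := Finset.ne_of_mem_erase hz
      simp only [hx, if_neg hzw, neg_mul_neg, hNsq]
    rw [h1]
    simp [hx]
    ring
  have hQ : Δ * (Δ * Δ + Δ) + Δ * (Δ + 1) ≤ x ⬝ᵥ ((Matrix.diagonal deg - N) *ᵥ x) := by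
    have hform : x ⬝ᵥ ((Matrix.diagonal deg - N) *ᵥ x)
        = ∑ z, x z * (deg z * x z - ∑ z', N z z' * x z') := by
      rw [dotProduct]
      exact Finset.sum_congr rfl fun z _ => by rw [hmv]
    rw [hform, ← Finset.sum_erase_add Finset.univ _ (Finset.mem_univ w)]
    have hwterm : x w * (deg w * x w - ∑ z', N w z' * x z') = Δ * (Δ * Δ + Δ) := by
      have hyw : ∑ z', N w z' * x z' = -Δ := by
        rw [← Finset.sum_erase_add Finset.univ _ (Finset.mem_univ w)]
        have h1 : ∑ z' ∈ e, N w z' * x z' = -∑ z' ∈ e, N w z' := by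
          rw [← Finset.sum_neg_distrib]
          apply Finset.sum_congr rfl
          intro z' hz'
          have hzw : z' ≠ w := Finset.ne_of_mem_erase hz'
          simp only [hx, if_neg hzw, mul_neg, hNsq]
        rw [h1, heΔ]
        simp [hx, hdiag]
      rw [hyw, hdw]
      simp only [hx, if_pos rfl]
      ring
    have hrest : Δ * (Δ + 1) ≤ ∑ z ∈ e, x z * (deg z * x z - ∑ z', N z z' * x z') := by
      have hcalc : Δ * (Δ + 1) = ∑ z ∈ e, N w z * (Δ + 1) := by
        rw [← Finset.sum_mul, heΔ]
      rw [hcalc]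
      apply Finset.sum_le_sum
      intro z hz
      have hzw : z ≠ w := Finset.ne_of_mem_erase hz
      have hxz : x z = -(N w z) := if_neg hzw
      have hy : ∑ z', N z z' * x z'
          = N z w * Δ - ∑ z' ∈ e, N z z' * N w z' := by
        rw [← Finset.sum_erase_add Finset.univ _ (Finset.mem_univ w)]
        have h1 : ∑ z' ∈ e, N z z' * x z' = -∑ z' ∈ e, N z z' * N w z' := by
          rw [← Finset.sum_neg_distrib]
          apply Finset.sum_congr rfl
          intro z' hz'
          have hz'w : z' ≠ w := Finset.ne_of_mem_erase hz'
          simp only [hx, if_neg hz'w, mul_neg]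
        rw [h1]
        simp only [hx, if_pos rfl]
        ring
      have hR : ∑ z' ∈ e, N z z' * N w z' ≤ deg z - N z w := by
        rw [← hesum z]
        apply Finset.sum_le_sum
        intro z' _
        calc N z z' * N w z' ≤ N z z' * 1 :=
              mul_le_mul_of_nonneg_left (hN1 _ _) (hN0 _ _)
          _ = N z z' := mul_one _
      have hR' : ∑ z' ∈ e, N z z' * N w z' ≤ deg z - N w z := by
        rwa [hsymm z w] at hR
      rw [hxz, hy, hsymm z w]
      set R : ℝ := ∑ z' ∈ e, N z z' * N w z' with hRdef
      have key2 : -N w z * (deg z * -N w z - (N w z * Δ - R))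
          = N w z * N w z * deg z + N w z * N w z * Δ - N w z * R := by ring
      rw [key2, hNsq w z]
      have h3 : N w z * R ≤ N w z * (deg z - N w z) :=
        mul_le_mul_of_nonneg_left hR' (hN0 w z)
      nlinarith [h3, hNsq w z, hN0 w z]
    linarith
  have hle := hc x
  rw [hxx] at hle
  have h2 : Δ * (Δ * Δ + Δ) + Δ * (Δ + 1) ≤ c * (Δ * Δ + Δ) := le_trans hQ hle
  nlinarith

end Aux

/-- if a simple mixed graph `G` on `n ≥ 1` vertices has at least one edge or
at least one arc, then `ν₁(G) ≥ max{Δ₁(G), Δ₂(G)} + 1` where `Δ₁(G) = max_v (d v + d⁺ v)`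
and `Δ₂(G) = max_v (d v + d⁻ v)`. -/


theorem stmt13 (n : ℕ) (hn : 0 < n) (E A : Fin n → Fin n → ℕ)
    (hE : ∀ u v, E u v = E v u) (hS : IsSimple E A)
    (hedge : (∃ u v, u ≠ v ∧ 1 ≤ E u v) ∨ (∃ u v, 1 ≤ A u v)) :
    ((max (Finset.univ.sup (fun v => dU E v + dOut A v))
        (Finset.univ.sup (fun v => dU E v + dIn A v)) : ℕ) : ℝ) + 1 ≤
      nuT E A hE ⟨0, by omega⟩ := by
  classical
  obtain ⟨hE1, hA1, hEd, hAd⟩ := hS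
  set N : Matrix (Fin n ⊕ Fin n) (Fin n ⊕ Fin n) ℝ := intAdj E A with hN
  -- row sums
  have hAu_row : ∀ v : Fin n, ∑ u, Au E v u = ((dU E v : ℕ) : ℝ) := by
    intro v
    rw [dU]
    push_cast
    rw [← Finset.sum_erase_add Finset.univ _ (Finset.mem_univ v), Finset.filter_ne']
    congr 1
    · apply Finset.sum_congr rfl
      intro u hu
      have h : v ≠ u := (Finset.ne_of_mem_erase hu).symm
      simp [Au, h]
    · simp [Au]
  have hB_row : ∀ v : Fin n, ∑ u, Bm A v u = ((dOut A v : ℕ) : ℝ) := by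
    intro v; rw [dOut]; push_cast; rfl
  have hB_col : ∀ v : Fin n, ∑ u, Bm A u v = ((dIn A v : ℕ) : ℝ) := by
    intro v; rw [dIn]; push_cast; rfl
  have hrow : ∀ z : Fin n ⊕ Fin n, ∑ z', N z z'
      = Sum.elim (fun v => ((dU E v + dOut A v : ℕ) : ℝ))
          (fun v => ((dU E v + dIn A v : ℕ) : ℝ)) z := by
    intro z
    cases z with
    | inl v =>
      rw [Fintype.sum_sum_type]
      have h1 : ∀ u, N (Sum.inl v) (Sum.inl u) = Au E v u := fun u => rfl
      have h2 : ∀ u, N (Sum.inl v) (Sum.inr u) = Bm A v u := fun u => rfl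
      simp only [h1, h2, hAu_row, hB_row, Sum.elim_inl]
      push_cast; ring
    | inr v =>
      rw [Fintype.sum_sum_type]
      have h1 : ∀ u, N (Sum.inr v) (Sum.inl u) = Bm A u v := fun u => rfl
      have h2 : ∀ u, N (Sum.inr v) (Sum.inr u) = Au E v u := fun u => rfl
      simp only [h1, h2, hAu_row, hB_col, Sum.elim_inr]
      push_cast; ring
  have hD : intDeg E A = Matrix.diagonal (fun z => ∑ z', N z z') := by
    have hfun : (Sum.elim (fun v => ((dU E v + dOut A v : ℕ) : ℝ))
        (fun v => ((dU E v + dIn A v : ℕ) : ℝ))) = fun z => ∑ z', N z z' :=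
      funext fun z => (hrow z).symm
    rw [intDeg, hfun]
  have hlapeq : Matrix.diagonal (fun z => ∑ z', N z z') - N = intLap E A := by
    rw [intLap, hD]
  -- entry properties
  have h01nat : ∀ k : ℕ, k ≤ 1 → ((k : ℝ) = 0 ∨ (k : ℝ) = 1) := by
    intro k hk; interval_cases k <;> simp
  have h01 : ∀ z z', N z z' = 0 ∨ N z z' = 1 := by
    intro z z'
    cases z with
    | inl u =>
      cases z' with
      | inl v =>
        show Au E u v = 0 ∨ Au E u v = 1
        by_cases h : u = v
        · left; simp [Au, h, hEd]
        · have : Au E u v = ((E u v : ℕ) : ℝ) := by simp [Au, h]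
          rw [this]; exact h01nat _ (hE1 u v)
      | inr v =>
        show Bm A u v = 0 ∨ Bm A u v = 1
        exact h01nat _ (hA1 u v)
    | inr u =>
      cases z' with
      | inl v =>
        show Bm A v u = 0 ∨ Bm A v u = 1
        exact h01nat _ (hA1 v u)
      | inr v =>
        show Au E u v = 0 ∨ Au E u v = 1
        by_cases h : u = v
        · left; simp [Au, h, hEd]
        · have : Au E u v = ((E u v : ℕ) : ℝ) := by simp [Au, h]
          rw [this]; exact h01nat _ (hE1 u v)
  have hdiagz : ∀ z, N z z = 0 := by
    intro z
    cases z with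
    | inl v => show Au E v v = 0; simp [Au, hEd]
    | inr v => show Au E v v = 0; simp [Au, hEd]
  have hherm := intAdj_isHermitian E A hE
  have hsymm : ∀ z z', N z z' = N z' z := by
    intro z z'
    have h := congrFun (congrFun hherm.eq z) z'
    simp only [Matrix.conjTranspose_apply, star_trivial] at h
    exact h.symm
  -- eigenvalue bound
  have h2n : 0 < n + n := by omega
  set c : ℝ := nuT E A hE ⟨0, by omega⟩ with hc
  have hlap := intLap_isHermitian E A hE
  have hcbound : ∀ j : Fin n ⊕ Fin n, (intLap_isHermitian E A hE).eigenvalues j ≤ c := by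
    intro j
    have h := sortDesc_zero_ge h2n
      (fun i => (intLap_isHermitian E A hE).eigenvalues (finSumFinEquiv.symm i))
      (finSumFinEquiv j)
    simpa [nuT, hc] using h
  have hray : ∀ x : (Fin n ⊕ Fin n) → ℝ,
      x ⬝ᵥ ((Matrix.diagonal (fun z => ∑ z', N z z') - N) *ᵥ x) ≤ c * (x ⬝ᵥ x) := by
    intro x
    rw [hlapeq]
    exact rayleigh_aux _ (intLap_isHermitian E A hE) c hcbound x
  -- choose the vertex of maximum degree
  set Δ₁ : ℕ := Finset.univ.sup (fun v => dU E v + dOut A v) with hΔ₁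
  set Δ₂ : ℕ := Finset.univ.sup (fun v => dU E v + dIn A v) with hΔ₂
  set m : ℕ := max Δ₁ Δ₂ with hm
  have hm1 : 1 ≤ Δ₁ := by
    rcases hedge with ⟨u, v, huv, hEuv⟩ | ⟨u, v, hAuv⟩
    · have hdu : 1 ≤ dU E u := by
        have hvmem : v ∈ Finset.univ.filter (fun x => x ≠ u) := by
          simp [Ne.symm huv]
        calc 1 ≤ E u v := hEuv
          _ ≤ ∑ x ∈ Finset.univ.filter (fun x => x ≠ u), E u x :=
              Finset.single_le_sum (fun i _ => Nat.zero_le _) hvmem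
          _ ≤ dU E u := Nat.le_add_right _ _
      calc 1 ≤ dU E u + dOut A u := le_trans hdu (Nat.le_add_right _ _)
        _ ≤ Δ₁ := by rw [hΔ₁]; exact Finset.le_sup (f := fun v => dU E v + dOut A v) (Finset.mem_univ u)
    · have hdu : 1 ≤ dOut A u := by
        calc 1 ≤ A u v := hAuv
          _ ≤ ∑ x, A u x := Finset.single_le_sum (fun i _ => Nat.zero_le _) (Finset.mem_univ v)
      calc 1 ≤ dU E u + dOut A u := le_trans hdu (Nat.le_add_left _ _)
        _ ≤ Δ₁ := by rw [hΔ₁]; exact Finset.le_sup (f := fun v => dU E v + dOut A v) (Finset.mem_univ u)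
  have hm1' : 1 ≤ m := le_trans hm1 (le_max_left _ _)
  have hune : (Finset.univ : Finset (Fin n)).Nonempty := ⟨⟨0, hn⟩, Finset.mem_univ _⟩
  obtain ⟨v₁, _, hv₁⟩ := Finset.exists_mem_eq_sup Finset.univ hune (fun v => dU E v + dOut A v)
  obtain ⟨v₂, _, hv₂⟩ := Finset.exists_mem_eq_sup Finset.univ hune (fun v => dU E v + dIn A v)
  obtain ⟨w, hwrow⟩ : ∃ w : Fin n ⊕ Fin n, ∑ z', N w z' = ((m : ℕ) : ℝ) := by
    rcases le_total Δ₂ Δ₁ with hcmp | hcmp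
    · refine ⟨Sum.inl v₁, ?_⟩
      rw [hrow, Sum.elim_inl, ← hv₁, ← hΔ₁, hm, max_eq_left hcmp]
    · refine ⟨Sum.inr v₂, ?_⟩
      rw [hrow, Sum.elim_inr, ← hv₂, ← hΔ₂, hm, max_eq_right hcmp]
  have hw1 : 1 ≤ ∑ z', N w z' := by
    rw [hwrow]
    exact_mod_cast hm1'
  have hfinal := key_aux N hsymm h01 hdiagz c hray w hw1
  rw [hwrow] at hfinal
  exact hfinal
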